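/- Let k be a field, A a finite-dimensional associative unital k-algebra with Jacobson radical J, and M an A-bimodule that is finite-dimensional over k and projective both as a left A-module and as a right A-module. Then the following conditions are equivalent: (1) M/JM ≅ A/J as right A-modules and M/MJ ≅ A/J as left A-modules; (2) M/JM ≅ A/J as left A-modules and M/MJ ≅ A/J as right A-modules; (3) M ≅ A as right A-modules and M ≅ A as left A-modules; (4) there exists a k-algebra automorphism φ of A such that M ≅ A_φ as A-bimodules. -/

import Mathlib

universe u v
open MulOpposite

section JacobsonFacts
variable {R : Type*} [Ring R]

lemma exists_left_inv_one_sub {a : R} (ha : a ∈ Ideal.jacobson (⊥ : Ideal R)) :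
    ∃ z : R, z * (1 - a) = 1 := by
  obtain ⟨z, hz⟩ := Ideal.mem_jacobson_iff.mp ha (-1)
  rw [Ideal.mem_bot, sub_eq_zero] at hz
  refine ⟨z, ?_⟩
  have h2 : z * (1 - a) = z * -1 * a + z := by noncomm_ring
  rw [h2, hz]

lemma isUnit_one_sub_of_mem_jacobson_bot {a : R} (ha : a ∈ Ideal.jacobson (⊥ : Ideal R)) :
    IsUnit (1 - a) := by
  obtain ⟨z, hz⟩ := exists_left_inv_one_sub ha
  have hza : -(z * a) ∈ Ideal.jacobson (⊥ : Ideal R) :=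
    neg_mem ((Ideal.jacobson (⊥ : Ideal R)).mul_mem_left z ha)
  obtain ⟨v, hv⟩ := exists_left_inv_one_sub hza
  have hz1 : z = 1 + z * a := by
    have : z * (1 - a) = z - z * a := by noncomm_ring
    rw [this] at hz
    rw [← hz]; abel
  have hvz : v * z = 1 := by
    rw [hz1]; rw [sub_neg_eq_add] at hv; exact hv
  have hveq : v = 1 - a := by
    calc v = v * (z * (1 - a)) := by rw [hz, mul_one]
    _ = v * z * (1 - a) := by rw [mul_assoc]
    _ = 1 - a := by rw [hvz, one_mul]
  exact ⟨⟨1 - a, z, by rw [← hveq]; exact hvz, hz⟩, rfl⟩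

lemma mem_jacobson_bot_iff_unit {a : R} :
    a ∈ Ideal.jacobson (⊥ : Ideal R) ↔ ∀ x : R, IsUnit (1 - x * a) := by
  constructor
  · intro ha x
    exact isUnit_one_sub_of_mem_jacobson_bot
      ((Ideal.jacobson (⊥ : Ideal R)).mul_mem_left x ha)
  · intro h
    rw [Ideal.jacobson, Ideal.mem_sInf]
    rintro m ⟨-, hm⟩
    by_contra ham
    have hlt : m < m ⊔ Ideal.span {a} := by
      refine lt_of_le_of_ne le_sup_left fun hh => ham ?_
      rw [hh]
      exact Submodule.mem_sup_right (Ideal.subset_span rfl)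
    have htop : m ⊔ Ideal.span {a} = ⊤ := hm.out.2 _ hlt
    have h1 : (1 : R) ∈ m ⊔ Ideal.span {a} := htop ▸ Submodule.mem_top
    obtain ⟨y, hy, z, hz, hyz⟩ := Submodule.mem_sup.mp h1
    obtain ⟨c, rfl⟩ := Submodule.mem_span_singleton.mp hz
    have hy' : y = 1 - c • a := by rw [← hyz]; abel
    have : m = ⊤ := m.eq_top_of_isUnit_mem hy (hy' ▸ h c)
    exact hm.ne_top this

lemma jacobson_bot_mul_mem_right {a r : R} (ha : a ∈ Ideal.jacobson (⊥ : Ideal R)) :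
    a * r ∈ Ideal.jacobson (⊥ : Ideal R) :=
  (Ideal.jacobson (⊥ : Ideal R)).mul_mem_right r ha

lemma isUnit_one_sub_swap {a b : R} (h : IsUnit (1 - a * b)) : IsUnit (1 - b * a) := by
  obtain ⟨u, hu⟩ := h
  have h1 : (1 - a * b) * ↑u⁻¹ = 1 := by rw [← hu]; exact u.mul_inv
  have h2 : (↑u⁻¹ : R) * (1 - a * b) = 1 := by rw [← hu]; exact u.inv_mul
  refine ⟨⟨1 - b * a, 1 + b * ↑u⁻¹ * a, ?_, ?_⟩, rfl⟩
  · have e1 : (1 - b * a) * (1 + b * ↑u⁻¹ * a) =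
        1 - b * a + b * ((1 - a * b) * ↑u⁻¹) * a := by noncomm_ring
    rw [e1, h1]; noncomm_ring
  · have e1 : (1 + b * ↑u⁻¹ * a) * (1 - b * a) =
        1 - b * a + b * ((↑u⁻¹ : R) * (1 - a * b)) * a := by noncomm_ring
    rw [e1, h2]; noncomm_ring

lemma op_mem_jacobson_bot_iff {a : R} :
    op a ∈ Ideal.jacobson (⊥ : Ideal Rᵐᵒᵖ) ↔ a ∈ Ideal.jacobson (⊥ : Ideal R) := by
  rw [mem_jacobson_bot_iff_unit, mem_jacobson_bot_iff_unit]
  constructor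
  · intro h x
    have := h (op x)
    rw [show (1 : Rᵐᵒᵖ) - op x * op a = op (1 - a * x) by simp [op_mul]] at this
    exact isUnit_one_sub_swap (isUnit_op.mp this)
  · intro h y
    have : IsUnit (1 - a * unop y) := isUnit_one_sub_swap (h (unop y))
    have := isUnit_op.mpr this
    rwa [show op (1 - a * unop y) = 1 - y * op a by simp [op_mul]] at this

end JacobsonFacts
section Nakayama
variable {R : Type*} [Ring R] {M : Type*} [AddCommGroup M] [Module R M]

lemma mem_jacobson_smul_span_finset {s : Finset M} {x : M}
    (hx : x ∈ (Ideal.jacobson (⊥ : Ideal R)) • Submodule.span R (s : Set M)) :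
    ∃ c : M → R, (∀ y, c y ∈ Ideal.jacobson (⊥ : Ideal R)) ∧ ∑ y ∈ s, c y • y = x := by
  refine Submodule.smul_induction_on hx ?_ ?_
  · intro r hr n hn
    obtain ⟨f, -, hf⟩ := Submodule.mem_span_finset.mp hn
    refine ⟨fun y => r * f y, fun y => jacobson_bot_mul_mem_right hr, ?_⟩
    rw [← hf, Finset.smul_sum]
    exact Finset.sum_congr rfl fun y _ => by rw [mul_smul]
  · rintro x y ⟨c, hc, rfl⟩ ⟨d, hd, rfl⟩
    refine ⟨fun y => c y + d y, fun y => add_mem (hc y) (hd y), ?_⟩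
    rw [← Finset.sum_add_distrib]
    exact Finset.sum_congr rfl fun y _ => by rw [add_smul]

lemma nakayama_span_finset (s : Finset M)
    (h : Submodule.span R (s : Set M) ≤
      (Ideal.jacobson (⊥ : Ideal R)) • Submodule.span R (s : Set M)) :
    Submodule.span R (s : Set M) = ⊥ := by
  classical
  induction s using Finset.strongInduction with
  | _ s ih =>
    rcases s.eq_empty_or_nonempty with rfl | ⟨x, hx⟩
    · simp
    · obtain ⟨c, hc, hsum⟩ := mem_jacobson_smul_span_finset (h (Submodule.subset_span hx))
      have hsplit : c x • x + ∑ y ∈ s.erase x, c y • y = x := by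
        rw [Finset.add_sum_erase s (fun y => c y • y) hx]; exact hsum
      obtain ⟨u, hu⟩ := isUnit_one_sub_of_mem_jacobson_bot (hc x)
      have hx' : x ∈ Submodule.span R ((s.erase x : Finset M) : Set M) := by
        have hS : ∑ y ∈ s.erase x, c y • y = x - c x • x := eq_sub_of_add_eq' hsplit
        have h1 : (1 - c x) • x = ∑ y ∈ s.erase x, c y • y := by
          rw [hS, sub_smul, one_smul]
        have hmem : (↑u⁻¹ : R) • ((1 - c x) • x) ∈
            Submodule.span R ((s.erase x : Finset M) : Set M) := by
          rw [h1]
          exact Submodule.smul_mem _ _ (Submodule.sum_mem _ fun y hy =>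
            Submodule.smul_mem _ _ (Submodule.subset_span hy))
        rwa [smul_smul, ← hu, u.inv_mul, one_smul] at hmem
      have hspan : Submodule.span R (s : Set M) =
          Submodule.span R ((s.erase x : Finset M) : Set M) := by
        refine le_antisymm (Submodule.span_le.mpr fun z hz => ?_)
          (Submodule.span_mono (by exact_mod_cast Finset.erase_subset x s))
        rcases eq_or_ne z x with rfl | hzx
        · exact hx'
        · exact Submodule.subset_span (Finset.mem_erase.mpr ⟨hzx, hz⟩)
      rw [hspan]
      exact ih (s.erase x) (Finset.erase_ssubset hx) (hspan ▸ h)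

lemma nakayama_fg {N : Submodule R M} (hfg : N.FG)
    (h : N ≤ (Ideal.jacobson (⊥ : Ideal R)) • N) : N = ⊥ := by
  obtain ⟨s, rfl⟩ := hfg
  exact nakayama_span_finset s h

end Nakayama
section Key
variable {R : Type*} {M : Type*}
  [Ring R]
  [AddCommGroup M] [Module R M]
  [Module.Projective R M]

lemma key_projective_cover (k : Type*) [Field k] [Algebra k R] [FiniteDimensional k R]
    [Module k M] [IsScalarTower k R M] [FiniteDimensional k M]
    (e : (M ⧸ ((Ideal.jacobson (⊥ : Ideal R)) • (⊤ : Submodule R M))) ≃ₗ[R]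
         (R ⧸ ((Ideal.jacobson (⊥ : Ideal R)) • (⊤ : Submodule R R)))) :
    Nonempty (M ≃ₗ[R] R) := by
  classical
  set Jb : Ideal R := Ideal.jacobson (⊥ : Ideal R) with hJb
  set N : Submodule R M := Jb • ⊤ with hN
  set NR : Submodule R R := Jb • ⊤ with hNR
  obtain ⟨m, hm⟩ := N.mkQ_surjective (e.symm (Submodule.Quotient.mk 1))
  set g : R →ₗ[R] M := LinearMap.toSpanSingleton R M m with hg
  have hgy : ∀ y : R, g y = y • m := fun y => rfl
  have hrange : LinearMap.range g ⊔ N = ⊤ := by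
    rw [eq_top_iff]
    intro x _
    obtain ⟨y, hy⟩ := NR.mkQ_surjective (e (Submodule.Quotient.mk x))
    have hmk : Submodule.Quotient.mk (p := N) (y • m) = Submodule.Quotient.mk (p := N) x := by
      have h1 : Submodule.Quotient.mk (p := N) (y • m) = y • Submodule.Quotient.mk (p := N) m :=
        rfl
      rw [h1]
      have h2 : (Submodule.Quotient.mk (p := N) m) = e.symm (Submodule.Quotient.mk 1) := hm
      rw [h2, ← map_smul]
      have h3 : y • (Submodule.Quotient.mk (p := NR) (1 : R)) =
          Submodule.Quotient.mk (p := NR) y := by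
        rw [← Submodule.Quotient.mk_smul, smul_eq_mul, mul_one]
      rw [Submodule.mkQ_apply] at hy
      rw [h3, hy, LinearEquiv.symm_apply_apply]
    have hxm : x - y • m ∈ N := by
      rw [← Submodule.Quotient.eq]
      exact hmk.symm
    have hxe : x = g y + (x - y • m) := by rw [hgy]; abel
    rw [hxe]
    exact Submodule.add_mem_sup (LinearMap.mem_range_self g y) hxm
  have hgsurj : Function.Surjective g := by
    set P := LinearMap.range g with hP
    haveI : Module.Finite k (M ⧸ P) :=
      Module.Finite.of_surjective (P.mkQ.restrictScalars k) (Submodule.mkQ_surjective P)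
    haveI : Module.Finite R (M ⧸ P) := Module.Finite.of_restrictScalars_finite k R _
    have hmapP : Submodule.map P.mkQ P = ⊥ := by
      rw [eq_bot_iff]
      rintro _ ⟨z, hz, rfl⟩
      simp only [Submodule.mem_bot, Submodule.mkQ_apply, Submodule.Quotient.mk_eq_zero]
      exact hz
    have htop : (⊤ : Submodule R (M ⧸ P)) ≤ Jb • ⊤ := by
      have h1 : Submodule.map P.mkQ (P ⊔ N) = ⊤ := by
        rw [hrange, Submodule.map_top, Submodule.range_mkQ]
      rw [Submodule.map_sup, hmapP, bot_sup_eq, hN, Submodule.map_smul'',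
        Submodule.map_top, Submodule.range_mkQ] at h1
      exact h1.ge
    have hbot : (⊤ : Submodule R (M ⧸ P)) = ⊥ :=
      nakayama_fg (Module.Finite.iff_fg.mp inferInstance) htop
    have : P = ⊤ := by
      rw [← Submodule.Quotient.subsingleton_iff]
      constructor
      intro a b
      have ha : a ∈ (⊥ : Submodule R (M ⧸ P)) := hbot ▸ Submodule.mem_top
      have hb : b ∈ (⊥ : Submodule R (M ⧸ P)) := hbot ▸ Submodule.mem_top
      rw [Submodule.mem_bot] at ha hb
      rw [ha, hb]
    rw [← LinearMap.range_eq_top]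
    exact this
  obtain ⟨h, hh⟩ := Module.projective_lifting_property g LinearMap.id hgsurj
  set K := LinearMap.ker g with hK
  have hgNR : NR ≤ Submodule.comap g N := by
    intro x hx
    have : g x ∈ Submodule.map g NR := Submodule.mem_map_of_mem hx
    rw [hNR, Submodule.map_smul''] at this
    exact Submodule.smul_mono le_rfl le_top this
  set gbar : (R ⧸ NR) →ₗ[R] (M ⧸ N) := Submodule.mapQ NR N g hgNR with hgbar
  have hgbar_mk : ∀ y : R, gbar (Submodule.Quotient.mk y) = Submodule.Quotient.mk (g y) :=
    fun y => by erw [Submodule.mapQ_apply]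
  have hgbar_surj : Function.Surjective gbar := by
    intro z
    obtain ⟨w, rfl⟩ := N.mkQ_surjective z
    obtain ⟨y, rfl⟩ := hgsurj w
    exact ⟨Submodule.Quotient.mk y, by rw [hgbar_mk, Submodule.mkQ_apply]⟩
  haveI : Module.Finite k (M ⧸ N) :=
    Module.Finite.of_surjective (N.mkQ.restrictScalars k) (Submodule.mkQ_surjective N)
  haveI : Module.Finite k (R ⧸ NR) :=
    Module.Finite.of_surjective (NR.mkQ.restrictScalars k) (Submodule.mkQ_surjective NR)
  have hdim : Module.finrank k (R ⧸ NR) = Module.finrank k (M ⧸ N) :=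
    (e.restrictScalars k).symm.finrank_eq
  have hgbar_inj : Function.Injective gbar := by
    have := (LinearMap.injective_iff_surjective_of_finrank_eq_finrank
      (f := gbar.restrictScalars k) hdim).mpr hgbar_surj
    exact this
  have hK_le : (K : Set R) ⊆ (NR : Set R) := by
    intro x hx
    have hx0 : g x = 0 := LinearMap.mem_ker.mp hx
    have : gbar (Submodule.Quotient.mk x) = 0 := by
      rw [hgbar_mk, hx0, Submodule.Quotient.mk_zero]
    have h0 : gbar 0 = 0 := map_zero _
    have := hgbar_inj (this.trans h0.symm)
    rwa [Submodule.Quotient.mk_eq_zero] at this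
  set π : R →ₗ[R] R := LinearMap.id - h ∘ₗ g with hπ
  have hπK : ∀ x ∈ K, π x = x := by
    intro x hx
    have hx0 : g x = 0 := LinearMap.mem_ker.mp hx
    simp [hπ, hx0]
  have hπrange : ∀ y : R, π y ∈ K := by
    intro y
    have hgh : g (h (g y)) = g y := by
      have := congrArg (fun f : M →ₗ[R] M => f (g y)) hh
      simpa using this
    simp only [hπ, LinearMap.sub_apply, LinearMap.id_apply, LinearMap.comp_apply]
    rw [LinearMap.mem_ker, map_sub, hgh, sub_self]
  have hKJK : K ≤ Jb • K := by
    intro x hx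
    have h1 : x ∈ Submodule.map π NR := ⟨x, hK_le hx, hπK x hx⟩
    rw [hNR, Submodule.map_smul''] at h1
    refine Submodule.smul_mono le_rfl ?_ h1
    rintro _ ⟨y, -, rfl⟩
    exact hπrange y
  haveI : Module.Finite k K := by
    have : Module.Finite k (K.restrictScalars k) := inferInstance
    exact this
  haveI : Module.Finite R K := Module.Finite.of_restrictScalars_finite k R _
  have hKbot : K = ⊥ := nakayama_fg (Module.Finite.iff_fg.mp inferInstance) hKJK
  exact ⟨(LinearEquiv.ofBijective g ⟨LinearMap.ker_eq_bot.mp hKbot, hgsurj⟩).symm⟩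

end Key
section Helpers
open MulOpposite

lemma smul_top_eq_span' {R M : Type*} [Ring R] [AddCommGroup M] [Module R M] (I : Ideal R) :
    I • (⊤ : Submodule R M) = Submodule.span R {x : M | ∃ a ∈ I, ∃ m : M, x = a • m} := by
  apply le_antisymm
  · rw [Submodule.smul_le]
    intro r hr n _
    exact Submodule.subset_span ⟨r, hr, n, rfl⟩
  · rw [Submodule.span_le]
    rintro x ⟨a, ha, m, rfl⟩
    exact Submodule.smul_mem_smul ha Submodule.mem_top

lemma span_set_subset_span {R S M : Type*} [Semiring R] [Semiring S] [AddCommMonoid M]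
    [Module R M] [Module S M] [SMulCommClass R S M] (T : Set M)
    (h : ∀ (r : R), ∀ t ∈ T, r • t ∈ T) :
    (Submodule.span R T : Set M) ⊆ (Submodule.span S T : Set M) := by
  intro x hx
  induction hx using Submodule.span_induction with
  | mem x hxT => exact Submodule.subset_span hxT
  | zero => exact (Submodule.span S T).zero_mem
  | add x y _ _ ihx ihy => exact (Submodule.span S T).add_mem ihx ihy
  | smul r x _ ih =>
    let L : M →ₗ[S] M :=
      { toFun := fun m => r • m
        map_add' := fun a b => smul_add r a b
        map_smul' := fun s m => (smul_comm r s m) }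
    have hmap : Submodule.map L (Submodule.span S T) ≤ Submodule.span S T := by
      rw [Submodule.map_span, Submodule.span_le]
      rintro _ ⟨t, ht, rfl⟩
      exact Submodule.subset_span (h r t ht)
    exact hmap ⟨x, ih, rfl⟩

/-- `A` with its right-module structure is isomorphic to the regular module over `Aᵐᵒᵖ`. -/
def opRightEquiv (A : Type*) [Ring A] : A ≃ₗ[Aᵐᵒᵖ] Aᵐᵒᵖ where
  toFun := op
  invFun := unop
  map_add' := fun a b => rfl
  map_smul' := fun c x => by
    simp only [RingHom.id_apply]
    rw [MulOpposite.smul_eq_mul_unop, smul_eq_mul]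
    rfl
  left_inv := fun a => rfl
  right_inv := fun a => rfl

lemma mem_jacobson_ringEquiv {A : Type*} [Ring A] (φ : A ≃+* A) {a : A}
    (ha : a ∈ Ideal.jacobson (⊥ : Ideal A)) : φ a ∈ Ideal.jacobson (⊥ : Ideal A) := by
  rw [mem_jacobson_bot_iff_unit] at ha ⊢
  intro x
  have h1 := (ha (φ.symm x)).map (φ : A →+* A)
  have h2 : (φ : A →+* A) (1 - φ.symm x * a) = 1 - x * φ a := by
    rw [map_sub, map_one, map_mul]
    norm_cast
    rw [RingEquiv.apply_symm_apply]
  rwa [h2] at h1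

end Helpers
section KeyRight
open MulOpposite

lemma key_right {k : Type u} {A : Type v} [Field k] [Ring A] [Algebra k A]
    [FiniteDimensional k A]
    {M : Type v} [AddCommGroup M] [Module k M] [Module Aᵐᵒᵖ M]
    [IsScalarTower k Aᵐᵒᵖ M] [FiniteDimensional k M] [Module.Projective Aᵐᵒᵖ M] (V : Submodule Aᵐᵒᵖ M)
    (hV : V = (Ideal.jacobson (⊥ : Ideal Aᵐᵒᵖ)) • (⊤ : Submodule Aᵐᵒᵖ M))
    (U : Submodule Aᵐᵒᵖ A)
    (hU : Submodule.map (opRightEquiv A : A →ₗ[Aᵐᵒᵖ] Aᵐᵒᵖ) U =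
      (Ideal.jacobson (⊥ : Ideal Aᵐᵒᵖ)) • (⊤ : Submodule Aᵐᵒᵖ Aᵐᵒᵖ))
    (e : (M ⧸ V) ≃ₗ[Aᵐᵒᵖ] (A ⧸ U)) : Nonempty (M ≃ₗ[Aᵐᵒᵖ] A) := by
  haveI : FiniteDimensional k Aᵐᵒᵖ :=
    Module.Finite.equiv (MulOpposite.opLinearEquiv k : A ≃ₗ[k] Aᵐᵒᵖ)
  have equiv2 : (A ⧸ U) ≃ₗ[Aᵐᵒᵖ]
      (Aᵐᵒᵖ ⧸ ((Ideal.jacobson (⊥ : Ideal Aᵐᵒᵖ)) • (⊤ : Submodule Aᵐᵒᵖ Aᵐᵒᵖ))) :=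
    Submodule.Quotient.equiv U _ (opRightEquiv A) hU
  have e' : (M ⧸ ((Ideal.jacobson (⊥ : Ideal Aᵐᵒᵖ)) • (⊤ : Submodule Aᵐᵒᵖ M))) ≃ₗ[Aᵐᵒᵖ]
      (Aᵐᵒᵖ ⧸ ((Ideal.jacobson (⊥ : Ideal Aᵐᵒᵖ)) • (⊤ : Submodule Aᵐᵒᵖ Aᵐᵒᵖ))) :=
    (hV ▸ e).trans equiv2
  obtain ⟨f⟩ := key_projective_cover k e'
  exact ⟨f.trans (opRightEquiv A).symm⟩

end KeyRight

section ThreeFour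
open MulOpposite

lemma three_to_four {k : Type u} {A : Type v} [Field k] [Ring A] [Algebra k A]
    [FiniteDimensional k A]
    {M : Type v} [AddCommGroup M] [Module k M]
    [Module A M] [Module Aᵐᵒᵖ M] [SMulCommClass A Aᵐᵒᵖ M]
    [IsScalarTower k A M] [IsScalarTower k Aᵐᵒᵖ M] (er : M ≃ₗ[Aᵐᵒᵖ] A) (el : M ≃ₗ[A] A) :
    ∃ (φ : A ≃ₐ[k] A) (e : M ≃ₗ[A] A), ∀ (b : A) (m : M), e (op b • m) = e m * φ b := by
  classical
  haveI : SMulCommClass Aᵐᵒᵖ A M := SMulCommClass.symm A Aᵐᵒᵖ M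
  set n : M := el.symm 1 with hn
  have hel_symm : ∀ x : A, el.symm x = x • n := by
    intro x
    conv_lhs => rw [← mul_one x, ← smul_eq_mul, map_smul]
  have hm_eq : ∀ m : M, m = el m • n := by
    intro m
    conv_lhs => rw [← el.symm_apply_apply m, hel_symm]
  set ψ : A → A := fun b => el (op b • n) with hψ
  have hkey : ∀ (b : A) (m : M), el (op b • m) = el m * ψ b := by
    intro b m
    conv_lhs => rw [hm_eq m]
    rw [smul_comm, map_smul, smul_eq_mul]
  have hone : ψ 1 = 1 := by
    simp only [hψ, op_one, one_smul, hn, LinearEquiv.apply_symm_apply]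
  have hmul : ∀ b c : A, ψ (b * c) = ψ b * ψ c := by
    intro b c
    have h1 : op (b * c) • n = op c • (op b • n) := by rw [← mul_smul, ← op_mul]
    rw [hψ]
    simp only
    rw [h1, hkey c (op b • n)]
  have hadd : ∀ b c : A, ψ (b + c) = ψ b + ψ c := by
    intro b c
    simp only [hψ, op_add, add_smul, map_add]
  have hzero : ψ 0 = 0 := by simp [hψ]
  have hcomm : ∀ c : k, ψ (algebraMap k A c) = algebraMap k A c := by
    intro c
    have h1 : op (algebraMap k A c) = algebraMap k Aᵐᵒᵖ c := rfl
    rw [hψ]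
    simp only
    rw [h1, algebraMap_smul]
    have h2 : el (c • n) = c • el n := map_smul (el.restrictScalars k) c n
    rw [h2, hn, LinearEquiv.apply_symm_apply, Algebra.algebraMap_eq_smul_one]
  set Ψ : A →ₐ[k] A :=
    { toFun := ψ
      map_one' := hone
      map_mul' := hmul
      map_zero' := hzero
      map_add' := hadd
      commutes' := hcomm } with hΨ
  have hinj : Function.Injective Ψ := by
    have h0 : ∀ b : A, ψ b = 0 → b = 0 := by
      intro b hb
      have hbn : op b • n = 0 := by
        have := congrArg el.symm hb
        rw [LinearEquiv.symm_apply_apply, map_zero] at this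
        exact this
      have hall : op b • (er.symm 1 : M) = 0 := by
        rw [hm_eq (er.symm 1), smul_comm, hbn, smul_zero]
      have : er.symm (op b • (1 : A)) = 0 := by rw [map_smul]; exact hall
      have h1 : op b • (1 : A) = 0 := by
        have := congrArg er this
        rw [LinearEquiv.apply_symm_apply, map_zero] at this
        exact this
      rw [op_smul_eq_mul, one_mul] at h1
      exact h1
    intro x y hxy
    have : ψ (x - y) = 0 := by
      have : ψ x - ψ y = 0 := by rw [sub_eq_zero]; exact hxy
      rw [← this]
      simp only [hψ, op_sub, sub_smul, map_sub]
    have := h0 _ this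
    rwa [sub_eq_zero] at this
  have hbij : Function.Bijective Ψ := by
    refine ⟨hinj, ?_⟩
    have := (LinearMap.injective_iff_surjective (f := Ψ.toLinearMap)).mp hinj
    exact this
  refine ⟨AlgEquiv.ofBijective Ψ hbij, el, ?_⟩
  intro b m
  exact hkey b m

end ThreeFour
section MoreHelpers
open MulOpposite

lemma jacobson_smul_top_eq {R : Type*} [Ring R] :
    (Ideal.jacobson (⊥ : Ideal R)) • (⊤ : Submodule R R) = Ideal.jacobson (⊥ : Ideal R) := by
  apply le_antisymm
  · rw [Submodule.smul_le]
    intro r hr n _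
    exact jacobson_bot_mul_mem_right (r := n) hr
  · intro a ha
    have := Submodule.smul_mem_smul (N := (⊤ : Submodule R R)) ha Submodule.mem_top (n := 1)
    simpa using this

@[simp] lemma opRightEquiv_apply {A : Type*} [Ring A] (x : A) : opRightEquiv A x = op x := rfl
@[simp] lemma opRightEquiv_symm_apply {A : Type*} [Ring A] (x : Aᵐᵒᵖ) :
    (opRightEquiv A).symm x = unop x := rfl

end MoreHelpers

/-- For a finite-dimensional algebra `A` with Jacobson radical `J` and an
`A`-bimodule `M`, finite-dimensional over `k` and projective on both sides, the following
are equivalent: (1) `M/JM ≅ A/J` as right modules and `M/MJ ≅ A/J` as left modules;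
(2) `M/JM ≅ A/J` as left modules and `M/MJ ≅ A/J` as right modules; (3) `M ≅ A` as right
modules and `M ≅ A` as left modules; (4) `M ≅ A_φ` as bimodules for some automorphism `φ`. -/
theorem bimodule_iso_twist_tfae
    {k : Type u} {A : Type v} [Field k] [Ring A] [Algebra k A] [FiniteDimensional k A]
    (M : Type v) [AddCommGroup M] [Module k M]
    [Module A M] [Module Aᵐᵒᵖ M] [SMulCommClass A Aᵐᵒᵖ M]
    [IsScalarTower k A M] [IsScalarTower k Aᵐᵒᵖ M] [FiniteDimensional k M]
    [Module.Projective A M] [Module.Projective Aᵐᵒᵖ M]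
    (J : Ideal A) (hJ : J = Ideal.jacobson ⊥)
    (Jr : Submodule Aᵐᵒᵖ A) (hJr : Jr = Submodule.span Aᵐᵒᵖ (J : Set A))
    (JMl : Submodule A M)
    (hJMl : JMl = Submodule.span A {x : M | ∃ a ∈ J, ∃ m : M, x = a • m})
    (JMr : Submodule Aᵐᵒᵖ M)
    (hJMr : JMr = Submodule.span Aᵐᵒᵖ {x : M | ∃ a ∈ J, ∃ m : M, x = a • m})
    (MJl : Submodule A M)
    (hMJl : MJl = Submodule.span A {x : M | ∃ a ∈ J, ∃ m : M, x = op a • m})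
    (MJr : Submodule Aᵐᵒᵖ M)
    (hMJr : MJr = Submodule.span Aᵐᵒᵖ {x : M | ∃ a ∈ J, ∃ m : M, x = op a • m}) :
    List.TFAE [
      Nonempty ((M ⧸ JMr) ≃ₗ[Aᵐᵒᵖ] (A ⧸ Jr)) ∧
        Nonempty ((M ⧸ MJl) ≃ₗ[A] (A ⧸ (J : Submodule A A))),
      Nonempty ((M ⧸ JMl) ≃ₗ[A] (A ⧸ (J : Submodule A A))) ∧
        Nonempty ((M ⧸ MJr) ≃ₗ[Aᵐᵒᵖ] (A ⧸ Jr)),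
      Nonempty (M ≃ₗ[Aᵐᵒᵖ] A) ∧ Nonempty (M ≃ₗ[A] A),
      ∃ (φ : A ≃ₐ[k] A) (e : M ≃ₗ[A] A), ∀ (b : A) (m : M), e (op b • m) = e m * φ b ] := by
  classical
  haveI : SMulCommClass Aᵐᵒᵖ A M := SMulCommClass.symm A Aᵐᵒᵖ M
  -- basic facts about `J`
  have hJr_mul : ∀ {a : A}, a ∈ J → ∀ r : A, a * r ∈ J := by
    intro a ha r
    rw [hJ] at ha ⊢
    exact jacobson_bot_mul_mem_right ha
  have hJl_mul : ∀ {a : A}, a ∈ J → ∀ r : A, r * a ∈ J := fun ha r => J.mul_mem_left r ha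
  have hmemop : ∀ a : A, op a ∈ Ideal.jacobson (⊥ : Ideal Aᵐᵒᵖ) ↔ a ∈ J := by
    intro a; rw [hJ]; exact op_mem_jacobson_bot_iff
  have hJr_mem : ∀ x : A, x ∈ Jr ↔ x ∈ J := by
    intro x
    constructor
    · intro hx
      rw [hJr] at hx
      induction hx using Submodule.span_induction with
      | mem y hy => exact hy
      | zero => exact J.zero_mem
      | add y z _ _ hy hz => exact J.add_mem hy hz
      | smul c y _ hy =>
        rw [MulOpposite.smul_eq_mul_unop]
        exact hJr_mul hy (unop c)
    · intro hx; rw [hJr]; exact Submodule.subset_span hx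
  have hJtop : (J : Submodule A A) = (Ideal.jacobson (⊥ : Ideal A)) • (⊤ : Submodule A A) := by
    rw [jacobson_smul_top_eq]; exact hJ
  have hU : Submodule.map ((opRightEquiv A : A ≃ₗ[Aᵐᵒᵖ] Aᵐᵒᵖ) : A →ₗ[Aᵐᵒᵖ] Aᵐᵒᵖ) Jr =
      (Ideal.jacobson (⊥ : Ideal Aᵐᵒᵖ)) • (⊤ : Submodule Aᵐᵒᵖ Aᵐᵒᵖ) := by
    rw [jacobson_smul_top_eq]
    ext x
    constructor
    · rintro ⟨y, hy, rfl⟩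
      exact (hmemop y).mpr ((hJr_mem y).mp hy)
    · intro hx
      refine ⟨unop x, (hJr_mem (unop x)).mpr ((hmemop (unop x)).mp ?_), ?_⟩
      · rwa [op_unop]
      · exact op_unop x
  have hJMl_top : JMl = (Ideal.jacobson (⊥ : Ideal A)) • (⊤ : Submodule A M) := by
    rw [hJMl, hJ, smul_top_eq_span']
  have hMJr_top : MJr = (Ideal.jacobson (⊥ : Ideal Aᵐᵒᵖ)) • (⊤ : Submodule Aᵐᵒᵖ M) := by
    have hset : {x : M | ∃ a ∈ J, ∃ m : M, x = op a • m} =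
        {x : M | ∃ z ∈ Ideal.jacobson (⊥ : Ideal Aᵐᵒᵖ), ∃ m : M, x = z • m} := by
      ext x
      constructor
      · rintro ⟨a, ha, m, rfl⟩
        exact ⟨op a, (hmemop a).mpr ha, m, rfl⟩
      · rintro ⟨z, hz, m, rfl⟩
        refine ⟨unop z, (hmemop (unop z)).mp (by rwa [op_unop]), m, by rw [op_unop]⟩
    rw [hMJr, hset, ← smul_top_eq_span']
  -- the sets underlying left/right versions agree
  have hJM_set : (JMl : Set M) = (JMr : Set M) := by
    rw [hJMl, hJMr]
    apply Set.Subset.antisymm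
    · refine span_set_subset_span _ ?_
      rintro b _ ⟨a, ha, m, rfl⟩
      exact ⟨b * a, hJl_mul ha b, m, (mul_smul b a m).symm⟩
    · refine span_set_subset_span _ ?_
      rintro c _ ⟨a, ha, m, rfl⟩
      exact ⟨a, ha, c • m, smul_comm c a m⟩
  have hMJ_set : (MJl : Set M) = (MJr : Set M) := by
    rw [hMJl, hMJr]
    apply Set.Subset.antisymm
    · refine span_set_subset_span _ ?_
      rintro b _ ⟨a, ha, m, rfl⟩
      exact ⟨a, ha, b • m, smul_comm b (op a) m⟩
    · refine span_set_subset_span _ ?_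
      rintro c _ ⟨a, ha, m, rfl⟩
      refine ⟨a * unop c, hJr_mul ha (unop c), m, ?_⟩
      rw [← mul_smul]
      rfl
  tfae_have 3 → 4 := by
    rintro ⟨⟨er⟩, ⟨el⟩⟩
    exact three_to_four er el
  tfae_have 4 → 1 := by
    rintro ⟨φ, e, he⟩
    have hφJ : ∀ a : A, a ∈ J ↔ φ a ∈ J := by
      intro a
      constructor
      · intro h; rw [hJ] at h ⊢; exact mem_jacobson_ringEquiv φ.toRingEquiv h
      · intro h; rw [hJ] at h ⊢
        have h2 := mem_jacobson_ringEquiv φ.symm.toRingEquiv h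
        have h3 : φ.symm.toRingEquiv (φ a) = a := φ.symm_apply_apply a
        rwa [h3] at h2
    set f : M ≃ₗ[Aᵐᵒᵖ] A :=
      { toFun := fun m => φ.symm (e m)
        map_add' := fun m₁ m₂ => by simp [map_add]
        map_smul' := fun c m => by
          simp only [RingHom.id_apply]
          have h1 : c • m = op (unop c) • m := by rw [op_unop]
          rw [h1, he (unop c) m, map_mul, AlgEquiv.symm_apply_apply,
            MulOpposite.smul_eq_mul_unop]
        invFun := fun x => e.symm (φ x)
        left_inv := fun m => by simp
        right_inv := fun x => by simp } with hfdef
    have hf : ∀ m : M, f m = φ.symm (e m) := fun _ => rfl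
    constructor
    · -- M ⧸ JMr ≃ A ⧸ Jr
      refine ⟨Submodule.Quotient.equiv JMr Jr f ?_⟩
      rw [hJMr, Submodule.map_span]
      apply le_antisymm
      · rw [Submodule.span_le]
        rintro _ ⟨x, ⟨a, ha, m, rfl⟩, rfl⟩
        have h1 : f (a • m) = φ.symm a * φ.symm (e m) := by
          rw [hf, map_smul, smul_eq_mul, map_mul]
        simp only [SetLike.mem_coe, LinearEquiv.coe_coe]
        rw [h1, hJr_mem]
        exact hJr_mul ((hφJ (φ.symm a)).mpr (by simpa using ha)) (φ.symm (e m))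
      · intro x hx
        have hxJ : x ∈ J := (hJr_mem x).mp hx
        apply Submodule.subset_span
        refine ⟨φ x • e.symm 1, ⟨φ x, (hφJ x).mp hxJ, e.symm 1, rfl⟩, ?_⟩
        rw [LinearEquiv.coe_coe, hf, map_smul, LinearEquiv.apply_symm_apply, smul_eq_mul, mul_one,
          AlgEquiv.symm_apply_apply]
    · -- M ⧸ MJl ≃ A ⧸ J
      refine ⟨Submodule.Quotient.equiv MJl (J : Submodule A A) e ?_⟩
      rw [hMJl, Submodule.map_span]
      apply le_antisymm
      · rw [Submodule.span_le]
        rintro _ ⟨x, ⟨a, ha, m, rfl⟩, rfl⟩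
        simp only [SetLike.mem_coe, LinearEquiv.coe_coe]
        rw [he]
        exact J.mul_mem_left (e m) ((hφJ a).mp ha)
      · intro x hx
        apply Submodule.subset_span
        refine ⟨op (φ.symm x) • e.symm 1, ⟨φ.symm x, (hφJ (φ.symm x)).mpr (by simpa using hx),
          e.symm 1, rfl⟩, ?_⟩
        rw [LinearEquiv.coe_coe, he, LinearEquiv.apply_symm_apply, one_mul, AlgEquiv.apply_symm_apply]
  tfae_have 4 → 2 := by
    rintro ⟨φ, e, he⟩
    have hφJ : ∀ a : A, a ∈ J ↔ φ a ∈ J := by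
      intro a
      constructor
      · intro h; rw [hJ] at h ⊢; exact mem_jacobson_ringEquiv φ.toRingEquiv h
      · intro h; rw [hJ] at h ⊢
        have h2 := mem_jacobson_ringEquiv φ.symm.toRingEquiv h
        have h3 : φ.symm.toRingEquiv (φ a) = a := φ.symm_apply_apply a
        rwa [h3] at h2
    set f : M ≃ₗ[Aᵐᵒᵖ] A :=
      { toFun := fun m => φ.symm (e m)
        map_add' := fun m₁ m₂ => by simp [map_add]
        map_smul' := fun c m => by
          simp only [RingHom.id_apply]
          have h1 : c • m = op (unop c) • m := by rw [op_unop]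
          rw [h1, he (unop c) m, map_mul, AlgEquiv.symm_apply_apply,
            MulOpposite.smul_eq_mul_unop]
        invFun := fun x => e.symm (φ x)
        left_inv := fun m => by simp
        right_inv := fun x => by simp } with hfdef
    have hf : ∀ m : M, f m = φ.symm (e m) := fun _ => rfl
    constructor
    · -- M ⧸ JMl ≃ A ⧸ J
      refine ⟨Submodule.Quotient.equiv JMl (J : Submodule A A) e ?_⟩
      rw [hJMl, Submodule.map_span]
      apply le_antisymm
      · rw [Submodule.span_le]
        rintro _ ⟨x, ⟨a, ha, m, rfl⟩, rfl⟩
        simp only [SetLike.mem_coe]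
        rw [map_smul, smul_eq_mul]
        exact hJr_mul ha (e m)
      · intro x hx
        apply Submodule.subset_span
        refine ⟨x • e.symm 1, ⟨x, hx, e.symm 1, rfl⟩, ?_⟩
        rw [map_smul, LinearEquiv.coe_coe, LinearEquiv.apply_symm_apply, smul_eq_mul, mul_one]
    · -- M ⧸ MJr ≃ A ⧸ Jr
      refine ⟨Submodule.Quotient.equiv MJr Jr f ?_⟩
      rw [hMJr, Submodule.map_span]
      apply le_antisymm
      · rw [Submodule.span_le]
        rintro _ ⟨x, ⟨a, ha, m, rfl⟩, rfl⟩
        have h1 : f (op a • m) = f m * a := by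
          rw [hf, he, map_mul, AlgEquiv.symm_apply_apply, hf]
        simp only [SetLike.mem_coe, LinearEquiv.coe_coe]
        rw [h1, hJr_mem]
        exact hJl_mul ha (f m)
      · intro x hx
        have hxJ : x ∈ J := (hJr_mem x).mp hx
        apply Submodule.subset_span
        refine ⟨op x • e.symm 1, ⟨x, hxJ, e.symm 1, rfl⟩, ?_⟩
        rw [LinearEquiv.coe_coe, hf, he, LinearEquiv.apply_symm_apply, one_mul, AlgEquiv.symm_apply_apply]
  tfae_have 1 → 3 := by
    rintro ⟨⟨e1⟩, ⟨e2⟩⟩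
    -- M·J ⊆ J·M
    have hsub1 : ∀ a ∈ J, ∀ m : M, op a • m ∈ JMr := by
      intro a ha m
      have h1 : e1 (Submodule.Quotient.mk (op a • m)) = 0 := by
        rw [Submodule.Quotient.mk_smul, map_smul]
        obtain ⟨x, hx⟩ := Jr.mkQ_surjective (e1 (Submodule.Quotient.mk m))
        rw [Submodule.mkQ_apply] at hx
        rw [← hx, ← Submodule.Quotient.mk_smul, MulOpposite.smul_eq_mul_unop]
        rw [Submodule.Quotient.mk_eq_zero]
        exact (hJr_mem _).mpr (hJl_mul ha x)
      have h2 : Submodule.Quotient.mk (p := JMr) (op a • m) = 0 := by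
        apply e1.injective
        rw [h1, map_zero]
      rwa [Submodule.Quotient.mk_eq_zero] at h2
    -- J·M ⊆ M·J
    have hsub2 : ∀ a ∈ J, ∀ m : M, a • m ∈ MJl := by
      intro a ha m
      have h1 : e2 (Submodule.Quotient.mk (a • m)) = 0 := by
        rw [Submodule.Quotient.mk_smul, map_smul]
        obtain ⟨x, hx⟩ := (J : Submodule A A).mkQ_surjective (e2 (Submodule.Quotient.mk m))
        rw [Submodule.mkQ_apply] at hx
        rw [← hx, ← Submodule.Quotient.mk_smul, smul_eq_mul]
        rw [Submodule.Quotient.mk_eq_zero]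
        exact hJr_mul ha x
      have h2 : Submodule.Quotient.mk (p := MJl) (a • m) = 0 := by
        apply e2.injective
        rw [h1, map_zero]
      rwa [Submodule.Quotient.mk_eq_zero] at h2
    have hJMl_le : JMl ≤ MJl := by
      rw [hJMl]
      rw [Submodule.span_le]
      rintro _ ⟨a, ha, m, rfl⟩
      exact hsub2 a ha m
    have hMJr_le : MJr ≤ JMr := by
      rw [hMJr]
      rw [Submodule.span_le]
      rintro _ ⟨a, ha, m, rfl⟩
      exact hsub1 a ha m
    have hJMr_eq : JMr = MJr := by
      apply le_antisymm _ hMJr_le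
      intro x hx
      have h1 : x ∈ (JMl : Set M) := by rw [hJM_set]; exact hx
      have h2 : x ∈ (MJl : Set M) := hJMl_le h1
      rw [hMJ_set] at h2
      exact h2
    have hMJl_eq : MJl = JMl := by
      apply le_antisymm _ hJMl_le
      intro x hx
      have h1 : x ∈ (MJr : Set M) := by rw [← hMJ_set]; exact hx
      have h2 : x ∈ (JMr : Set M) := hMJr_le h1
      rw [← hJM_set] at h2
      exact h2
    constructor
    · -- right module iso
      have hV : JMr = (Ideal.jacobson (⊥ : Ideal Aᵐᵒᵖ)) • (⊤ : Submodule Aᵐᵒᵖ M) := by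
        rw [hJMr_eq, hMJr_top]
      exact key_right (k := k) JMr hV Jr hU e1
    · -- left module iso
      have h1 : MJl = (Ideal.jacobson (⊥ : Ideal A)) • (⊤ : Submodule A M) := by
        rw [hMJl_eq, hJMl_top]
      rw [h1, hJtop] at e2
      exact key_projective_cover k e2
  tfae_have 2 → 3 := by
    rintro ⟨⟨e1⟩, ⟨e2⟩⟩
    constructor
    · exact key_right (k := k) MJr hMJr_top Jr hU e2
    · rw [hJMl_top, hJtop] at e1
      exact key_projective_cover k e1
  tfae_finish
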